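/- arXiv:1302.3238 — 3 statements merged into one kernel-verified Lean document; each statement's English description precedes it below -/
import Mathlib

section
/- Let {x_{ki} : 1 ≤ k ≤ N, 1 ≤ i ≤ n} be independent real random variables such that for each k the variables x_{k1}, …, x_{kn} are identically distributed with common distribution F_k having finite variance. Let t_n^{(k)} = x̄_k − E[x̄_k | x_{k1} − x̄_k, …, x_{kn} − x̄_k] be the Pitman estimator from the k-th row, and let t_n = ȳ − E[ȳ | y_1 − ȳ, …, y_n − ȳ] be the Pitman estimator from the sample y_i = Σ_{k=1}^{N} x_{ki}, i = 1, …, n, which is a sample of size n from the convolution F = F_1 ∗ … ∗ F_N. Then Var(t_n) ≥ Var(t_n^{(1)}) + … + Var(t_n^{(N)}). -/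
open MeasureTheory ProbabilityTheory Finset

/-- The Pitman estimator (evaluated at `θ = 0`) from the sample `Z i`, `i : ι`:
`t = Z̄ - E[Z̄ | residual vector]`. -/
noncomputable def pitman {Ω : Type*} [MeasureSpace Ω] {ι : Type*} [Fintype ι]
    (Z : ι → Ω → ℝ) : Ω → ℝ :=
  fun ω =>
    (∑ i, Z i ω) / (Fintype.card ι : ℝ) -
      (ℙ[fun ω' => (∑ i, Z i ω') / (Fintype.card ι : ℝ) |
        MeasurableSpace.comap
          (fun ω' i => Z i ω' - (∑ j, Z j ω') / (Fintype.card ι : ℝ)) inferInstance]) ω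

namespace PitmanAux

variable {Ω : Type*} {m m₁ m₂ mf mΩ : MeasurableSpace Ω} {μ : Measure Ω} [IsProbabilityMeasure μ]

lemma integrable_mul_L2 {f g : Ω → ℝ} (hf : MemLp f 2 μ) (hg : MemLp g 2 μ) :
    Integrable (fun ω => f ω * g ω) μ := by
  have h := (hf.integrable_sq.add hg.integrable_sq).div_const 2
  refine h.mono' (hf.aestronglyMeasurable.mul hg.aestronglyMeasurable) (ae_of_all _ fun ω => ?_)
  simp only [Pi.add_apply, Real.norm_eq_abs, abs_mul]
  nlinarith [sq_nonneg (|f ω| - |g ω|), sq_abs (f ω), sq_abs (g ω), abs_nonneg (f ω),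
    abs_nonneg (g ω)]

lemma memℒp_two_condexp (hm : m ≤ mΩ) {f : Ω → ℝ}
    (hf : MemLp f 2 μ) : MemLp (μ[f|m]) 2 μ := by
  have hg := Lp.memLp (↑(condExpL2 ℝ ℝ hm (hf.toLp f)) : Lp ℝ 2 μ)
  refine hg.ae_eq (ae_eq_condExp_of_forall_setIntegral_eq hm (hf.integrable one_le_two)
    (fun s _ _ => (hg.integrable one_le_two).integrableOn)
    (fun s hs hμs => ?_) (aestronglyMeasurable_condExpL2 hm _))
  rw [integral_condExpL2_eq hm (hf.toLp f) hs hμs.ne]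
  exact setIntegral_congr_ae (hm s hs) (hf.coeFn_toLp.mono fun x hx _ => hx)

lemma integral_sub_condexp_mul (hm : m ≤ mΩ) {f g : Ω → ℝ}
    (hf : MemLp f 2 μ) (hg : MemLp g 2 μ) (hgm : AEStronglyMeasurable[m] g μ) :
    ∫ ω, (f ω - (μ[f|m]) ω) * g ω ∂μ = 0 := by
  have hcf : MemLp (μ[f|m]) 2 μ := memℒp_two_condexp hm hf
  have h1 : Integrable (fun ω => g ω * f ω) μ := integrable_mul_L2 hg hf
  have h2 : Integrable (fun ω => g ω * (μ[f|m]) ω) μ := integrable_mul_L2 hg hcf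
  have hpull : μ[g * f|m] =ᵐ[μ] g * μ[f|m] :=
    condExp_mul_of_aestronglyMeasurable_left hgm h1 (hf.integrable one_le_two)
  have key : ∫ ω, g ω * f ω ∂μ = ∫ ω, g ω * (μ[f|m]) ω ∂μ := by
    have h3 : ∫ ω, (μ[g * f|m]) ω ∂μ = ∫ ω, (g * f) ω ∂μ := integral_condExp hm
    have h4 : ∫ ω, (μ[g * f|m]) ω ∂μ = ∫ ω, (g * μ[f|m]) ω ∂μ := integral_congr_ae hpull
    simpa [Pi.mul_apply] using h3.symm.trans h4
  have hring : (fun ω => (f ω - (μ[f|m]) ω) * g ω)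
      = fun ω => g ω * f ω - g ω * (μ[f|m]) ω := by funext ω; ring
  rw [hring, integral_sub h1 h2, key, sub_self]

lemma integral_sq_condexp_mono (h12 : m₁ ≤ m₂) (h2 : m₂ ≤ mΩ)
    {f : Ω → ℝ} (hf : MemLp f 2 μ) :
    ∫ ω, (f ω - (μ[f|m₂]) ω) ^ 2 ∂μ ≤ ∫ ω, (f ω - (μ[f|m₁]) ω) ^ 2 ∂μ := by
  have hm1 : m₁ ≤ mΩ := h12.trans h2
  have hc1 : MemLp (μ[f|m₁]) 2 μ := memℒp_two_condexp hm1 hf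
  have hc2 : MemLp (μ[f|m₂]) 2 μ := memℒp_two_condexp h2 hf
  have hgL2 : MemLp (fun ω => (μ[f|m₂]) ω - (μ[f|m₁]) ω) 2 μ := hc2.sub hc1
  have hgm : AEStronglyMeasurable[m₂] (fun ω => (μ[f|m₂]) ω - (μ[f|m₁]) ω) μ :=
    (stronglyMeasurable_condExp.sub (stronglyMeasurable_condExp.mono h12)).aestronglyMeasurable
  have horth : ∫ ω, (f ω - (μ[f|m₂]) ω) * ((μ[f|m₂]) ω - (μ[f|m₁]) ω) ∂μ = 0 :=
    integral_sub_condexp_mul h2 hf hgL2 hgm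
  have hfc2 : MemLp (fun ω => f ω - (μ[f|m₂]) ω) 2 μ := hf.sub hc2
  have hint1 : Integrable (fun ω => (f ω - (μ[f|m₂]) ω) ^ 2) μ := hfc2.integrable_sq
  have hint2 : Integrable (fun ω => (f ω - (μ[f|m₂]) ω) * ((μ[f|m₂]) ω - (μ[f|m₁]) ω)) μ :=
    integrable_mul_L2 hfc2 hgL2
  have hint3 : Integrable (fun ω => ((μ[f|m₂]) ω - (μ[f|m₁]) ω) ^ 2) μ := hgL2.integrable_sq
  have hexp : (fun ω => (f ω - (μ[f|m₁]) ω) ^ 2)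
      = fun ω => (f ω - (μ[f|m₂]) ω) ^ 2 +
          (2 * ((f ω - (μ[f|m₂]) ω) * ((μ[f|m₂]) ω - (μ[f|m₁]) ω)) +
            ((μ[f|m₂]) ω - (μ[f|m₁]) ω) ^ 2) := by
    funext ω; ring
  have hint4 : Integrable (fun ω => 2 * ((f ω - (μ[f|m₂]) ω) * ((μ[f|m₂]) ω - (μ[f|m₁]) ω)) +
      ((μ[f|m₂]) ω - (μ[f|m₁]) ω) ^ 2) μ := (hint2.const_mul 2).add hint3
  rw [hexp, integral_add hint1 hint4, integral_add (hint2.const_mul 2) hint3,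
    integral_const_mul, horth]
  have hnn : 0 ≤ ∫ ω, ((μ[f|m₂]) ω - (μ[f|m₁]) ω) ^ 2 ∂μ :=
    integral_nonneg fun ω => sq_nonneg _
  linarith

lemma condexp_sup_of_indep (h1 : m₁ ≤ mΩ) (h2 : m₂ ≤ mΩ)
    {f : Ω → ℝ} (hfint : Integrable f μ) (hfm : StronglyMeasurable[mf] f)
    (hindep : Indep (mf ⊔ m₁) m₂ μ) :
    μ[f | m₁ ⊔ m₂] =ᵐ[μ] μ[f | m₁] := by
  have hle : m₁ ⊔ m₂ ≤ mΩ := sup_le h1 h2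
  set π : Set (Set Ω) :=
    {s | ∃ s₁ s₂, MeasurableSet[m₁] s₁ ∧ MeasurableSet[m₂] s₂ ∧ s = s₁ ∩ s₂} with hπ
  have hgen : m₁ ⊔ m₂ = MeasurableSpace.generateFrom π := by
    apply le_antisymm
    · refine sup_le ?_ ?_
      · intro s hs
        exact MeasurableSpace.measurableSet_generateFrom
          ⟨s, Set.univ, hs, MeasurableSet.univ, (Set.inter_univ s).symm⟩
      · intro s hs
        exact MeasurableSpace.measurableSet_generateFrom
          ⟨Set.univ, s, MeasurableSet.univ, hs, (Set.univ_inter s).symm⟩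
    · refine MeasurableSpace.generateFrom_le ?_
      rintro s ⟨s₁, s₂, h₁, h₂, rfl⟩
      exact ((le_sup_left : m₁ ≤ m₁ ⊔ m₂) _ h₁).inter ((le_sup_right : m₂ ≤ m₁ ⊔ m₂) _ h₂)
  have hpi : IsPiSystem π := by
    rintro s ⟨s₁, s₂, h₁, h₂, rfl⟩ t ⟨t₁, t₂, ht₁, ht₂, rfl⟩ _
    exact ⟨s₁ ∩ t₁, s₂ ∩ t₂, h₁.inter ht₁, h₂.inter ht₂, by rw [Set.inter_inter_inter_comm]⟩
  have key : ∀ s, MeasurableSet[m₁ ⊔ m₂] s →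
      ∫ ω in s, (μ[f|m₁]) ω ∂μ = ∫ ω in s, f ω ∂μ := by
    have hbasic : ∀ t ∈ π, ∫ ω in t, (μ[f|m₁]) ω ∂μ = ∫ ω in t, f ω ∂μ := by
      rintro t ⟨s₁, s₂, h₁, h₂, rfl⟩
      have hs₁ : MeasurableSet s₁ := h1 _ h₁
      have hs₂ : MeasurableSet s₂ := h2 _ h₂
      have hfactor : ∀ h : Ω → ℝ, Integrable h μ → StronglyMeasurable[mf ⊔ m₁] h →
          ∫ ω in s₁ ∩ s₂, h ω ∂μ = (∫ ω in s₁, h ω ∂μ) * (μ s₂).toReal := by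
        intro h hint hm
        have hXm : Measurable[mf ⊔ m₁] (s₁.indicator h) :=
          (hm.indicator ((le_sup_right : m₁ ≤ mf ⊔ m₁) _ h₁)).measurable
        have hYm : Measurable[m₂] (s₂.indicator fun _ => (1 : ℝ)) :=
          measurable_const.indicator h₂
        have hXY : IndepFun (s₁.indicator h) (s₂.indicator fun _ => (1 : ℝ)) μ :=
          indep_of_indep_of_le_right (indep_of_indep_of_le_left hindep hXm.comap_le)
            hYm.comap_le
        have heq : (s₁.indicator h * s₂.indicator fun _ => (1 : ℝ)) = (s₁ ∩ s₂).indicator h := by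
          funext ω
          by_cases hω₁ : ω ∈ s₁ <;> by_cases hω₂ : ω ∈ s₂ <;>
            simp [Set.indicator_apply, hω₁, hω₂, Set.mem_inter_iff]
        have hmul := IndepFun.integral_mul_eq_mul_integral hXY (hint.aestronglyMeasurable.indicator hs₁)
          ((measurable_const.indicator hs₂).aestronglyMeasurable)
        rw [heq] at hmul
        have hone : integral μ (s₂.indicator fun _ => (1 : ℝ)) = (μ s₂).toReal :=
          integral_indicator_one hs₂
        rw [← integral_indicator (hs₁.inter hs₂), hmul, integral_indicator hs₁, hone]
      have e1 := hfactor f hfint (hfm.mono le_sup_left)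
      have e2 := hfactor (μ[f|m₁]) integrable_condExp
        (stronglyMeasurable_condExp.mono le_sup_right)
      rw [e1, e2, setIntegral_condExp h1 hfint h₁]
    intro s hs
    refine MeasurableSpace.induction_on_inter
      (C := fun s _ => ∫ ω in s, (μ[f|m₁]) ω ∂μ = ∫ ω in s, f ω ∂μ)
      hgen hpi (by simp) hbasic ?_ ?_ s hs
    · intro t ht hC
      have ht' : MeasurableSet t := hle _ ht
      have htot : ∫ ω, (μ[f|m₁]) ω ∂μ = ∫ ω, f ω ∂μ := integral_condExp h1
      have ha := integral_add_compl ht' (integrable_condExp : Integrable (μ[f|m₁]) μ)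
      have hb := integral_add_compl ht' hfint
      linarith
    · intro g hdisj hmeasg hC
      rw [integral_iUnion (fun i => hle _ (hmeasg i)) hdisj integrable_condExp.integrableOn,
        integral_iUnion (fun i => hle _ (hmeasg i)) hdisj hfint.integrableOn]
      exact tsum_congr hC
  exact (ae_eq_condExp_of_forall_setIntegral_eq hle hfint
    (fun s _ _ => integrable_condExp.integrableOn) (fun s hs _ => key s hs)
    ((stronglyMeasurable_condExp (m := m₁) (μ := μ) (f := f)).mono
      (le_sup_left : m₁ ≤ m₁ ⊔ m₂)).aestronglyMeasurable).symm

lemma comap_factor_le {δ γ : Type*} [mδ : MeasurableSpace δ] [mγ : MeasurableSpace γ]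
    {W : Ω → δ} {φ : δ → γ} {W' : Ω → γ} (hφ : Measurable φ) (h : W' = φ ∘ W) :
    MeasurableSpace.comap W' mγ ≤ MeasurableSpace.comap W mδ := by
  rw [h, ← MeasurableSpace.comap_comp]
  exact MeasurableSpace.comap_mono hφ.comap_le

lemma comap_pi_eq_iSup {ι β : Type*} [MeasurableSpace β] (w : ι → Ω → β) :
    MeasurableSpace.comap (fun ω i => w i ω) MeasurableSpace.pi
      = ⨆ i, MeasurableSpace.comap (w i) inferInstance := by
  have hpi : (MeasurableSpace.pi : MeasurableSpace (ι → β))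
      = ⨆ i, MeasurableSpace.comap (fun b => b i) inferInstance := rfl
  rw [hpi, MeasurableSpace.comap_iSup]
  exact iSup_congr fun i => by rw [MeasurableSpace.comap_comp]; rfl



section PitmanDefs

variable {Ω : Type*} [MeasureSpace Ω] {ι : Type*} [Fintype ι]

/-- the sample mean -/
noncomputable def meanF (Z : ι → Ω → ℝ) : Ω → ℝ :=
  fun ω => (∑ i, Z i ω) / (Fintype.card ι : ℝ)

/-- the residual vector -/
noncomputable def resid (Z : ι → Ω → ℝ) : Ω → ι → ℝ :=
  fun ω i => Z i ω - (∑ j, Z j ω) / (Fintype.card ι : ℝ)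

/-- the σ-algebra generated by the residual vector -/
noncomputable def resSigma (Z : ι → Ω → ℝ) : MeasurableSpace Ω :=
  MeasurableSpace.comap (resid Z) inferInstance

lemma pitman_eq (Z : ι → Ω → ℝ) :
    pitman Z = fun ω => meanF Z ω - (ℙ[meanF Z | resSigma Z]) ω := rfl

lemma measurable_meanF {Z : ι → Ω → ℝ} (hZ : ∀ i, Measurable (Z i)) :
    Measurable (meanF Z) :=
  (Finset.measurable_sum univ fun i _ => hZ i).div_const _

variable [IsProbabilityMeasure (ℙ : Measure Ω)]

lemma memℒp_meanF {Z : ι → Ω → ℝ} (hZ : ∀ i, MemLp (Z i) 2 ℙ) : MemLp (meanF Z) 2 ℙ := by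
  have h := (memLp_finset_sum' univ fun i (_ : i ∈ univ) => hZ i).const_mul
    ((Fintype.card ι : ℝ))⁻¹
  exact h.ae_eq (ae_of_all _ fun ω => by simp [meanF, Finset.sum_apply, div_eq_inv_mul])

lemma measurable_resid {Z : ι → Ω → ℝ} (hZ : ∀ i, Measurable (Z i)) :
    Measurable (resid Z) :=
  measurable_pi_lambda _ fun i => (hZ i).sub (measurable_meanF hZ)

lemma resSigma_le {Z : ι → Ω → ℝ} (hZ : ∀ i, Measurable (Z i)) :
    resSigma Z ≤ (inferInstance : MeasurableSpace Ω) :=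
  (measurable_resid hZ).comap_le

lemma memℒp_pitman {Z : ι → Ω → ℝ} (hZm : ∀ i, Measurable (Z i))
    (hZ2 : ∀ i, MemLp (Z i) 2 ℙ) : MemLp (pitman Z) 2 ℙ := by
  rw [pitman_eq]
  exact (memℒp_meanF hZ2).sub (memℒp_two_condexp (resSigma_le hZm) (memℒp_meanF hZ2))

lemma integral_pitman_eq_zero {Z : ι → Ω → ℝ} (hZm : ∀ i, Measurable (Z i))
    (hZ2 : ∀ i, MemLp (Z i) 2 ℙ) : ∫ ω, pitman Z ω ∂ℙ = 0 := by
  simp only [pitman_eq]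
  rw [integral_sub ((memℒp_meanF hZ2).integrable one_le_two) integrable_condExp,
    integral_condExp (resSigma_le hZm), sub_self]

lemma variance_pitman {Z : ι → Ω → ℝ} (hZm : ∀ i, Measurable (Z i))
    (hZ2 : ∀ i, MemLp (Z i) 2 ℙ) :
    variance (pitman Z) ℙ
      = ∫ ω, (meanF Z ω - (ℙ[meanF Z | resSigma Z]) ω) ^ 2 ∂ℙ := by
  rw [variance_of_integral_eq_zero (memℒp_pitman hZm hZ2).aemeasurable
    (integral_pitman_eq_zero hZm hZ2)]
  rfl

end PitmanDefs

end PitmanAux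

open PitmanAux

/-- **Superadditivity of the variance of Pitman estimators under convolution** (Kagan).
If the rows `x k` are independent samples of size `n` from `F k` with finite variances,
`t_n^{(k)}` is the Pitman estimator from the `k`-th row, and `t_n` is the Pitman estimator
from the sample `y i = Σ_k x k i` of size `n` from `F_1 ∗ … ∗ F_N`, then
`Var(t_n) ≥ Σ_k Var(t_n^{(k)})`. -/
theorem pitman_superadditive
    {Ω : Type*} [MeasureSpace Ω] [IsProbabilityMeasure (ℙ : Measure Ω)]
    {N n : ℕ} (hN : 1 ≤ N) (hn : 1 ≤ n)
    (x : Fin N → Fin n → Ω → ℝ)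
    (hmeas : ∀ k i, Measurable (x k i))
    (hindep : iIndepFun
      (fun p : Fin N × Fin n => x p.1 p.2) ℙ)
    (F : Fin N → Measure ℝ)
    (hdist : ∀ k i, Measure.map (x k i) ℙ = F k)
    (hL2 : ∀ k i, MemLp (x k i) 2 ℙ) :
    ∑ k, variance (pitman (x k)) ℙ ≤
      variance (pitman (fun i ω => ∑ k, x k i ω)) ℙ := by
  classical
  set y : Fin n → Ω → ℝ := fun i ω => ∑ k, x k i ω with hy
  have hym : ∀ i, Measurable (y i) := fun i =>
    Finset.measurable_sum _ fun k _ => hmeas k i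
  have hy2 : ∀ i, MemLp (y i) 2 ℙ := fun i =>
    (memLp_finset_sum' univ fun k (_ : k ∈ univ) => hL2 k i).ae_eq
      (ae_of_all _ fun ω => by simp [hy, Finset.sum_apply])
  have hGle : ∀ k, resSigma (x k) ≤ (inferInstance : MeasurableSpace Ω) :=
    fun k => resSigma_le (hmeas k)
  have hVle : (⨆ k, resSigma (x k)) ≤ (inferInstance : MeasurableSpace Ω) := iSup_le hGle
  -- residual σ-algebra is below the row σ-algebra
  have hGM : ∀ k, resSigma (x k) ≤
      MeasurableSpace.comap (fun ω (i : Fin n) => x k i ω) MeasurableSpace.pi := by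
    intro k
    refine comap_factor_le
      (φ := fun (v : Fin n → ℝ) i => v i - (∑ j, v j) / (Fintype.card (Fin n) : ℝ)) ?_ rfl
    exact measurable_pi_lambda _ fun i => (measurable_pi_apply i).sub
      ((Finset.measurable_sum univ fun j _ => measurable_pi_apply j).div_const _)
  -- the sample mean is measurable w.r.t. the row σ-algebra
  have hmeanM : ∀ k,
      StronglyMeasurable[MeasurableSpace.comap (fun ω (i : Fin n) => x k i ω) MeasurableSpace.pi]
      (meanF (x k)) := by
    intro k
    have hrow :
        Measurable[MeasurableSpace.comap (fun ω (i : Fin n) => x k i ω) MeasurableSpace.pi]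
        (fun ω (i : Fin n) => x k i ω) := comap_measurable _
    exact (((Finset.measurable_sum univ fun i (_ : i ∈ univ) =>
      measurable_pi_apply i).div_const ((Fintype.card (Fin n) : ℝ))).comp hrow).stronglyMeasurable
  -- decomposition of V
  have hVdec : ∀ k : Fin N, (⨆ j, resSigma (x j))
      = resSigma (x k) ⊔ ⨆ j, ⨆ (_ : j ≠ k), resSigma (x j) := by
    intro k
    apply le_antisymm
    · refine iSup_le fun j => ?_
      rcases eq_or_ne j k with rfl | hj
      · exact le_sup_left
      · exact le_trans (le_iSup₂ (f := fun j (_ : j ≠ k) => resSigma (x j)) j hj) le_sup_right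
    · exact sup_le (le_iSup (fun j => resSigma (x j)) k)
        (iSup₂_le fun j _ => le_iSup (fun j => resSigma (x j)) j)
  -- U ≤ V
  have hUV : resSigma y ≤ ⨆ k, resSigma (x k) := by
    have h1 : resSigma y ≤
        MeasurableSpace.comap (fun ω (k : Fin N) => resid (x k) ω) MeasurableSpace.pi := by
      refine comap_factor_le
        (φ := fun (v : Fin N → Fin n → ℝ) (i : Fin n) => ∑ k, v k i) ?_ ?_
      · exact measurable_pi_lambda _ fun i =>
          Finset.measurable_sum _ fun k _ => (measurable_pi_apply i).comp (measurable_pi_apply k)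
      · funext ω
        funext i
        show resid y ω i = ∑ k, resid (x k) ω i
        simp only [resid, hy]
        rw [Finset.sum_sub_distrib, ← Finset.sum_div, Finset.sum_comm]
    rw [comap_pi_eq_iSup (fun k => resid (x k))] at h1
    exact h1
  -- row σ-algebras are below finset-bundle σ-algebras
  have hMle : ∀ (S : Finset (Fin N × Fin n)) (k : Fin N), (∀ i : Fin n, (k, i) ∈ S) →
      MeasurableSpace.comap (fun ω (i : Fin n) => x k i ω) MeasurableSpace.pi ≤
      MeasurableSpace.comap (fun ω (p : ↥S) => x p.1.1 p.1.2 ω) MeasurableSpace.pi := by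
    intro S k hk
    exact comap_factor_le (φ := fun (v : ↥S → ℝ) (i : Fin n) => v ⟨(k, i), hk i⟩)
      (measurable_pi_lambda _ fun i => measurable_pi_apply _) rfl
  -- pairwise independence of rows
  have hpairIndep : ∀ j k : Fin N, j ≠ k →
      Indep (MeasurableSpace.comap (fun ω (i : Fin n) => x j i ω) MeasurableSpace.pi)
        (MeasurableSpace.comap (fun ω (i : Fin n) => x k i ω) MeasurableSpace.pi) ℙ := by
    intro j k hjk
    have hd : Disjoint (univ.filter fun p : Fin N × Fin n => p.1 = j)
        (univ.filter fun p : Fin N × Fin n => p.1 = k) := by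
      rw [Finset.disjoint_left]
      rintro ⟨a, b⟩ ha hb
      simp only [Finset.mem_filter] at ha hb
      exact hjk (ha.2 ▸ hb.2 ▸ rfl)
    have h1 := hindep.indepFun_finset _ _ hd (fun p => hmeas p.1 p.2)
    exact indep_of_indep_of_le_right
      (indep_of_indep_of_le_left h1 (hMle _ j (by simp)))
      (hMle _ k (by simp))
  -- independence for the conditional-expectation reduction
  have hRowIndep : ∀ k : Fin N,
      Indep ((MeasurableSpace.comap (fun ω (i : Fin n) => x k i ω) MeasurableSpace.pi)
          ⊔ resSigma (x k))
        (⨆ j, ⨆ (_ : j ≠ k), resSigma (x j)) ℙ := by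
    intro k
    have hd : Disjoint (univ.filter fun p : Fin N × Fin n => p.1 = k)
        (univ.filter fun p : Fin N × Fin n => p.1 ≠ k) := by
      rw [Finset.disjoint_left]
      rintro ⟨a, b⟩ ha hb
      simp only [Finset.mem_filter] at ha hb
      exact hb.2 ha.2
    have h1 := hindep.indepFun_finset _ _ hd (fun p => hmeas p.1 p.2)
    refine indep_of_indep_of_le_right (indep_of_indep_of_le_left h1 ?_) ?_
    · exact sup_le (hMle _ k (by simp)) ((hGM k).trans (hMle _ k (by simp)))
    · refine iSup₂_le fun j hj => (hGM j).trans (hMle _ j fun i => ?_)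
      simp [hj]
  -- conditional expectation reduction
  have hcondk : ∀ k, (ℙ[meanF (x k) | ⨆ j, resSigma (x j)])
      =ᵐ[ℙ] ℙ[meanF (x k) | resSigma (x k)] := by
    intro k
    rw [hVdec k]
    exact condexp_sup_of_indep (hGle k) (iSup₂_le fun j _ => hGle j)
      ((memℒp_meanF (hL2 k)).integrable one_le_two) (hmeanM k) (hRowIndep k)
  -- mean of y is the sum of the means
  have hymean : meanF y = fun ω => ∑ k, meanF (x k) ω := by
    funext ω
    simp only [meanF, hy]
    rw [← Finset.sum_div]
    congr 1
    exact Finset.sum_comm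
  have hsum_cond : (ℙ[meanF y | ⨆ j, resSigma (x j)])
      =ᵐ[ℙ] fun ω => ∑ k, (ℙ[meanF (x k) | resSigma (x k)]) ω := by
    have h0 : meanF y = ∑ k, meanF (x k) := by
      rw [hymean]; funext ω; simp [Finset.sum_apply]
    have h1 := condExp_finsetSum (m := ⨆ j, resSigma (x j)) (μ := ℙ) (s := univ)
      (f := fun k => meanF (x k)) (fun k _ => (memℒp_meanF (hL2 k)).integrable one_le_two)
    rw [← h0] at h1
    have h2 : ∀ᵐ ω ∂ℙ, ∀ k, (ℙ[meanF (x k) | ⨆ j, resSigma (x j)]) ω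
        = (ℙ[meanF (x k) | resSigma (x k)]) ω := ae_all_iff.mpr fun k => hcondk k
    filter_upwards [h1, h2] with ω h1ω h2ω
    rw [h1ω, Finset.sum_apply]
    exact Finset.sum_congr rfl fun k _ => h2ω k
  -- L² facts for the individual Pitman estimators
  have hpitL2 : ∀ k, MemLp (pitman (x k)) 2 ℙ := fun k => memℒp_pitman (hmeas k) (hL2 k)
  have hpitMeasM : ∀ k,
      Measurable[MeasurableSpace.comap (fun ω (i : Fin n) => x k i ω) MeasurableSpace.pi]
      (pitman (x k)) := by
    intro k
    rw [pitman_eq]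
    exact (hmeanM k).measurable.sub (stronglyMeasurable_condExp.mono (hGM k)).measurable
  have hpairPit : (↑(univ : Finset (Fin N)) : Set (Fin N)).Pairwise
      fun j k => IndepFun (pitman (x j)) (pitman (x k)) ℙ := by
    intro j _ k _ hjk
    exact indep_of_indep_of_le_right
      (indep_of_indep_of_le_left (hpairIndep j k hjk) (hpitMeasM j).comap_le)
      (hpitMeasM k).comap_le
  have hvar_sum : variance (∑ k, pitman (x k)) ℙ = ∑ k, variance (pitman (x k)) ℙ :=
    IndepFun.variance_sum (fun k _ => hpitL2 k) hpairPit
  have hsumL2 : MemLp (∑ k, pitman (x k)) 2 ℙ := memLp_finset_sum' _ fun k _ => hpitL2 k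
  have hsumInt0 : ∫ ω, (∑ k, pitman (x k)) ω ∂ℙ = 0 := by
    have h := integral_finset_sum (μ := ℙ) univ
      (fun k (_ : k ∈ univ) => (hpitL2 k).integrable one_le_two)
    simp only [Finset.sum_apply]
    rw [h]
    simp only [integral_pitman_eq_zero (hmeas _) (hL2 _), Finset.sum_const_zero]
  have hchain1 : ∑ k, variance (pitman (x k)) ℙ
      = ∫ ω, ((∑ k, pitman (x k)) ω) ^ 2 ∂ℙ := by
    rw [← hvar_sum, variance_of_integral_eq_zero hsumL2.aemeasurable hsumInt0]
  have hptwise : ∀ ω, ((∑ k, pitman (x k)) ω)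
      = meanF y ω - ∑ k, (ℙ[meanF (x k) | resSigma (x k)]) ω := by
    intro ω
    rw [Finset.sum_apply]
    have he : ∀ k, pitman (x k) ω
        = meanF (x k) ω - (ℙ[meanF (x k) | resSigma (x k)]) ω := fun k => by
      rw [pitman_eq]
    rw [Finset.sum_congr rfl fun k _ => he k, Finset.sum_sub_distrib, hymean]
  have hae2 : (fun ω => ((∑ k, pitman (x k)) ω) ^ 2)
      =ᵐ[ℙ] fun ω => (meanF y ω - (ℙ[meanF y | ⨆ j, resSigma (x j)]) ω) ^ 2 := by
    filter_upwards [hsum_cond] with ω hω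
    rw [hptwise ω, hω]
  calc ∑ k, variance (pitman (x k)) ℙ
      = ∫ ω, ((∑ k, pitman (x k)) ω) ^ 2 ∂ℙ := hchain1
    _ = ∫ ω, (meanF y ω - (ℙ[meanF y | ⨆ j, resSigma (x j)]) ω) ^ 2 ∂ℙ :=
        integral_congr_ae hae2
    _ ≤ ∫ ω, (meanF y ω - (ℙ[meanF y | resSigma y]) ω) ^ 2 ∂ℙ :=
        integral_sq_condexp_mono hUV hVle (memℒp_meanF hy2)
    _ = variance (pitman y) ℙ := (variance_pitman hym hy2).symm
end

section
/- Let X and Y be independent real random variables whose distributions have densities with respect to Lebesgue measure that are positive Lebesgue-almost everywhere. Let f, g : ℝ → ℝ be locally integrable Borel functions and h : ℝ → ℝ a Borel function such that f(X) + g(Y) = h(X + Y) almost surely. Then f and g are almost everywhere affine with the same slope: there exist constants a, b, c ∈ ℝ such that f(x) = a·x + b for Lebesgue-almost every x and g(y) = a·y + c for Lebesgue-almost every y. -/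
open MeasureTheory ProbabilityTheory
open scoped ENNReal

theorem aux_cauchy_ae_plane
    (f g h : ℝ → ℝ) (hf : Measurable f) (hg : Measurable g) (hh : Measurable h)
    (hfloc : LocallyIntegrable f (volume : Measure ℝ))
    (hgloc : LocallyIntegrable g (volume : Measure ℝ))
    (heqprod : ∀ᵐ p ∂((volume : Measure ℝ).prod (volume : Measure ℝ)),
      f p.1 + g p.2 = h (p.1 + p.2)) :
    ∃ a b c : ℝ,
      (∀ᵐ u ∂(volume : Measure ℝ), f u = a * u + b) ∧
      (∀ᵐ u ∂(volume : Measure ℝ), g u = a * u + c) := by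
  have hEmeas : MeasurableSet {p : ℝ × ℝ | f p.1 + g p.2 = h (p.1 + p.2)} :=
    measurableSet_eq_fun (by fun_prop) (by fun_prop)
  have hxy : ∀ᵐ x ∂(volume : Measure ℝ), ∀ᵐ y ∂(volume : Measure ℝ),
      f x + g y = h (x + y) := Measure.ae_ae_of_ae_prod heqprod
  have hyx : ∀ᵐ y ∂(volume : Measure ℝ), ∀ᵐ x ∂(volume : Measure ℝ),
      f x + g y = h (x + y) := (Measure.ae_ae_comm hEmeas).mp hxy
  -- interval integrability of g and h
  have hgint : ∀ a b : ℝ, IntervalIntegrable g volume a b := fun a b =>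
    (hgloc.integrableOn_isCompact isCompact_uIcc).intervalIntegrable
  have hfint : ∀ a b : ℝ, IntervalIntegrable f volume a b := fun a b =>
    (hfloc.integrableOn_isCompact isCompact_uIcc).intervalIntegrable
  obtain ⟨x₀, hx₀⟩ := hxy.exists
  have hh_ae : ∀ᵐ s ∂(volume : Measure ℝ), h s = f x₀ + g (s - x₀) := by
    have := (measurePreserving_sub_right (volume : Measure ℝ) x₀).quasiMeasurePreserving.ae hx₀
    filter_upwards [this] with s hs
    have e : x₀ + (s - x₀) = s := by ring
    rw [e] at hs
    exact hs.symm
  have hint : ∀ a b : ℝ, IntervalIntegrable h volume a b := by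
    intro a b
    have h1 : IntervalIntegrable (fun s => f x₀ + g (s - x₀)) volume a b := by
      refine intervalIntegrable_const.add ?_
      have := (hgint (a - x₀) (b - x₀)).comp_sub_right x₀
      simpa using this
    rw [intervalIntegrable_iff] at h1 ⊢
    exact h1.congr (ae_restrict_of_ae (hh_ae.mono fun s hs => hs.symm))
  set φ : ℝ → ℝ := fun x => ∫ u in x..(x + 1), h u with hφdef
  have hφcont : Continuous φ := by
    have h1 : Continuous fun x : ℝ => ∫ u in (0:ℝ)..x, h u :=
      intervalIntegral.continuous_primitive hint 0
    have e : ∀ x : ℝ, φ x = (∫ u in (0:ℝ)..(x + 1), h u) - ∫ u in (0:ℝ)..x, h u := fun x =>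
      (intervalIntegral.integral_interval_sub_left (hint 0 (x + 1)) (hint 0 x)).symm
    simp only [hφdef]
    rw [show (fun x => ∫ u in x..(x + 1), h u) =
        (fun x => (∫ u in (0:ℝ)..(x + 1), h u) - ∫ u in (0:ℝ)..x, h u) from funext e]
    exact (h1.comp (continuous_id.add continuous_const)).sub h1
  have key : ∀ t x : ℝ, φ (x + t) - φ x = φ t - φ 0 := by
    have H : ∀ t : ℝ, ∃ c, ∀ x, φ (x + t) - φ x = c := by
      intro t
      have hA : ∀ᵐ y ∂(volume : Measure ℝ),
          (∀ᵐ x ∂(volume : Measure ℝ), f x + g y = h (x + y)) ∧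
          (∀ᵐ x ∂(volume : Measure ℝ), f x + g (y + t) = h (x + (y + t))) := by
        refine hyx.and ?_
        exact (measurePreserving_add_right (volume : Measure ℝ) t).quasiMeasurePreserving.ae hyx
      obtain ⟨y₂, hy1, hy2⟩ := hA.exists
      refine ⟨g (y₂ + t) - g y₂, fun x => ?_⟩
      have hu : ∀ᵐ u ∂(volume : Measure ℝ), h (u + t) - h u = g (y₂ + t) - g y₂ := by
        have h12 := hy1.and hy2
        have h3 := (measurePreserving_sub_right (volume : Measure ℝ) y₂).quasiMeasurePreserving.ae h12
        filter_upwards [h3] with u hu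
        obtain ⟨e1, e2⟩ := hu
        have r1 : u - y₂ + y₂ = u := by ring
        have r2 : u - y₂ + (y₂ + t) = u + t := by ring
        rw [r1] at e1
        rw [r2] at e2
        linarith
      have hi1 : IntervalIntegrable (fun u => h (u + t)) volume x (x + 1) := by
        have := (hint (x + t) (x + 1 + t)).comp_add_right t
        simpa using this
      have e1 : (∫ u in x..(x + 1), (h (u + t) - h u)) = φ (x + t) - φ x := by
        rw [intervalIntegral.integral_sub hi1 (hint x (x + 1)),
          intervalIntegral.integral_comp_add_right h t]
        have : x + 1 + t = x + t + 1 := by ring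
        rw [this]
      have e2 : (∫ u in x..(x + 1), (h (u + t) - h u)) = g (y₂ + t) - g y₂ := by
        rw [intervalIntegral.integral_congr_ae
          (g := fun _ : ℝ => g (y₂ + t) - g y₂) (hu.mono fun u hu _ => hu)]
        simp
      linarith
    intro t x
    obtain ⟨c, hc⟩ := H t
    have h0 := hc 0
    rw [zero_add] at h0
    rw [hc x, h0]
  -- φ minus its value at 0 is additive, continuous, hence linear
  have hadd : ∀ s t : ℝ, φ (s + t) - φ 0 = (φ s - φ 0) + (φ t - φ 0) := by
    intro s t
    have := key t s
    linarith
  set a : ℝ := φ 1 - φ 0 with ha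
  have hlin : ∀ x : ℝ, φ x - φ 0 = a * x := by
    set Φ : ℝ →+ ℝ := AddMonoidHom.mk' (fun x => φ x - φ 0) hadd with hΦ
    have hΦc : Continuous Φ := by
      show Continuous fun x => φ x - φ 0
      exact hφcont.sub continuous_const
    intro x
    have h1 : Φ.toRealLinearMap hΦc x = x • Φ.toRealLinearMap hΦc 1 := by
      rw [← (Φ.toRealLinearMap hΦc).map_smul]
      norm_num
    simp only [AddMonoidHom.coe_toRealLinearMap] at h1
    have h2 : φ x - φ 0 = x • (φ 1 - φ 0) := h1
    rw [smul_eq_mul] at h2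
    rw [ha, h2, mul_comm]
  refine ⟨a, φ 0 - ∫ y in (0:ℝ)..1, g y, φ 0 - ∫ x in (0:ℝ)..1, f x, ?_, ?_⟩
  · filter_upwards [hxy] with x hx
    have hhi : IntervalIntegrable (fun y => h (x + y)) volume 0 1 := by
      have := (hint x (1 + x)).comp_add_left x
      simpa using this
    have e : (∫ y in (0:ℝ)..1, (f x + g y)) = ∫ y in (0:ℝ)..1, h (x + y) :=
      intervalIntegral.integral_congr_ae (hx.mono fun y hy _ => hy)
    rw [intervalIntegral.integral_add intervalIntegrable_const (hgint 0 1)] at e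
    simp only [intervalIntegral.integral_const, sub_zero, one_smul] at e
    have e2 : (∫ y in (0:ℝ)..1, h (x + y)) = φ x := by
      rw [intervalIntegral.integral_comp_add_left h x]
      simp only [add_zero, hφdef]
    rw [e2] at e
    have := hlin x
    linarith
  · filter_upwards [hyx] with y hy
    have hhi : IntervalIntegrable (fun x => h (x + y)) volume 0 1 := by
      have := (hint y (1 + y)).comp_add_right y
      simpa using this
    have e : (∫ x in (0:ℝ)..1, (f x + g y)) = ∫ x in (0:ℝ)..1, h (x + y) :=
      intervalIntegral.integral_congr_ae (hy.mono fun x hx _ => hx)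
    rw [intervalIntegral.integral_add (hfint 0 1) intervalIntegrable_const] at e
    simp only [intervalIntegral.integral_const, sub_zero, one_smul] at e
    have e2 : (∫ x in (0:ℝ)..1, h (x + y)) = φ y := by
      rw [intervalIntegral.integral_comp_add_right h y]
      rw [show (0:ℝ) + y = y by ring, show (1:ℝ) + y = y + 1 by ring]
    rw [e2] at e
    have := hlin y
    linarith

/-- **A Cauchy-type functional equation for independent random variables.**
Let `X`, `Y` be independent real random variables whose laws have Lebesgue-a.e. positive
densities, and let `f`, `g` be locally integrable Borel functions and `h` a Borel function
with `f(X) + g(Y) = h(X + Y)` almost surely. Then `f` and `g` are a.e. affine with a common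
slope: there are `a b c : ℝ` with `f x = a·x + b` for a.e. `x` and `g y = a·y + c`
for a.e. `y`. -/
theorem cauchy_equation_random_variables
    {Ω : Type*} [MeasureSpace Ω] [IsProbabilityMeasure (ℙ : Measure Ω)]
    (X Y : Ω → ℝ) (hX : Measurable X) (hY : Measurable Y)
    (hindep : IndepFun X Y ℙ)
    (pX pY : ℝ → ℝ≥0∞) (hpXmeas : Measurable pX) (hpYmeas : Measurable pY)
    (hlawX : Measure.map X ℙ = (volume : Measure ℝ).withDensity pX)
    (hlawY : Measure.map Y ℙ = (volume : Measure ℝ).withDensity pY)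
    (hposX : ∀ᵐ u ∂(volume : Measure ℝ), 0 < pX u)
    (hposY : ∀ᵐ u ∂(volume : Measure ℝ), 0 < pY u)
    (f g h : ℝ → ℝ) (hf : Measurable f) (hg : Measurable g) (hh : Measurable h)
    (hfloc : LocallyIntegrable f (volume : Measure ℝ))
    (hgloc : LocallyIntegrable g (volume : Measure ℝ))
    (heq : ∀ᵐ ω ∂(ℙ : Measure Ω), f (X ω) + g (Y ω) = h (X ω + Y ω)) :
    ∃ a b c : ℝ,
      (∀ᵐ u ∂(volume : Measure ℝ), f u = a * u + b) ∧
      (∀ᵐ u ∂(volume : Measure ℝ), g u = a * u + c) := by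
  have hEmeas : MeasurableSet {p : ℝ × ℝ | f p.1 + g p.2 = h (p.1 + p.2)} :=
    measurableSet_eq_fun (by fun_prop) (by fun_prop)
  have hmap : Measure.map (fun ω => (X ω, Y ω)) ℙ =
      ((volume : Measure ℝ).withDensity pX).prod ((volume : Measure ℝ).withDensity pY) := by
    rw [← hlawX, ← hlawY]
    exact (indepFun_iff_map_prod_eq_prod_map_map hX.aemeasurable hY.aemeasurable).mp hindep
  have hacX : (volume : Measure ℝ) ≪ (volume : Measure ℝ).withDensity pX := by
    refine Measure.AbsolutelyContinuous.mk fun s hs h0 => ?_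
    rw [withDensity_apply_eq_zero hpXmeas] at h0
    have hz : volume {u : ℝ | ¬ 0 < pX u} = 0 := hposX
    have hsub : s ⊆ ({u : ℝ | pX u ≠ 0} ∩ s) ∪ {u : ℝ | ¬ 0 < pX u} := by
      intro u hu
      by_cases hpu : pX u = 0
      · exact Or.inr (by simp [hpu])
      · exact Or.inl ⟨hpu, hu⟩
    exact le_antisymm (le_trans (measure_mono hsub)
      (le_trans (measure_union_le _ _) (by rw [h0, hz]; simp))) zero_le
  have hacY : (volume : Measure ℝ) ≪ (volume : Measure ℝ).withDensity pY := by
    refine Measure.AbsolutelyContinuous.mk fun s hs h0 => ?_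
    rw [withDensity_apply_eq_zero hpYmeas] at h0
    have hz : volume {u : ℝ | ¬ 0 < pY u} = 0 := hposY
    have hsub : s ⊆ ({u : ℝ | pY u ≠ 0} ∩ s) ∪ {u : ℝ | ¬ 0 < pY u} := by
      intro u hu
      by_cases hpu : pY u = 0
      · exact Or.inr (by simp [hpu])
      · exact Or.inl ⟨hpu, hu⟩
    exact le_antisymm (le_trans (measure_mono hsub)
      (le_trans (measure_union_le _ _) (by rw [h0, hz]; simp))) zero_le
  have hac : (volume : Measure ℝ).prod (volume : Measure ℝ) ≪
      ((volume : Measure ℝ).withDensity pX).prod ((volume : Measure ℝ).withDensity pY) :=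
    hacX.prod hacY
  have heq' : ∀ᵐ p ∂(((volume : Measure ℝ).withDensity pX).prod
      ((volume : Measure ℝ).withDensity pY)), f p.1 + g p.2 = h (p.1 + p.2) := by
    rw [← hmap]
    exact (ae_map_iff (hX.prodMk hY).aemeasurable hEmeas).mpr heq
  exact aux_cauchy_ae_plane f g h hf hg hh hfloc hgloc (hac.ae_le heq')
end

section
/- There exist independent real random variables X and Y, each having a non-degenerate, nonatomic (continuous) distribution, together with Borel measurable functions φ, ψ : ℝ → ℝ, such that X = φ(X + Y) almost surely and Y = ψ(X + Y) almost surely. Consequently, for arbitrary Borel measurable functions f, g : ℝ → ℝ there is a Borel measurable h : ℝ → ℝ with f(X) + g(Y) = h(X + Y) almost surely, so the Cauchy-type equation f(X) + g(Y) = h(X + Y) for independent random variables admits nonlinear solutions. (Such X and Y are obtained by splitting the binary digits of a uniform random variable on (0,1) into the even-indexed and odd-indexed digits.) -/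
open MeasureTheory ProbabilityTheory

namespace CauchyNL

/-- the `j`-th binary digit of `x` (after the binary point). -/
noncomputable def bit (j : ℕ) (x : ℝ) : ℕ := (⌊x * 2 ^ (j + 1)⌋ % 2).toNat

lemma bit_le_one (j : ℕ) (x : ℝ) : bit j x ≤ 1 := by
  have h := Int.emod_lt_of_pos (⌊x * 2 ^ (j + 1)⌋) (show (0:ℤ) < 2 by norm_num)
  have h0 := Int.emod_nonneg (⌊x * 2 ^ (j + 1)⌋) (show (2:ℤ) ≠ 0 by norm_num)
  unfold bit; omega

lemma bit_cast (j : ℕ) (x : ℝ) : ((bit j x : ℤ)) = ⌊x * 2 ^ (j + 1)⌋ % 2 := by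
  have h0 := Int.emod_nonneg (⌊x * 2 ^ (j + 1)⌋) (show (2:ℤ) ≠ 0 by norm_num)
  unfold bit; omega

/-- value of a 0/1 sequence as a real number in `[0,1]`. -/
noncomputable def val (c : ℕ → ℕ) : ℝ := ∑' k, (c k : ℝ) / 2 ^ (k + 1)

lemma summable_val (c : ℕ → ℕ) (hc : ∀ k, c k ≤ 1) :
    Summable (fun k => (c k : ℝ) / 2 ^ (k + 1)) := by
  refine Summable.of_nonneg_of_le (fun k => by positivity) ?_ (summable_geometric_two' 1)
  intro k
  rw [div_div, ← pow_succ']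
  gcongr
  exact_mod_cast hc k

lemma val_nonneg (c : ℕ → ℕ) : 0 ≤ val c :=
  tsum_nonneg (fun k => by positivity)

lemma val_le_one (c : ℕ → ℕ) (hc : ∀ k, c k ≤ 1) : val c ≤ 1 := by
  have := tsum_geometric_two' 1
  calc val c ≤ ∑' k : ℕ, (1:ℝ) / 2 / 2 ^ k := by
        apply Summable.tsum_le_tsum _ (summable_val c hc) (summable_geometric_two' 1)
        intro k
        rw [div_div, ← pow_succ']
        gcongr
        exact_mod_cast hc k
    _ = 1 := tsum_geometric_two' 1

end CauchyNL
namespace CauchyNL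

lemma val_lt_one (c : ℕ → ℕ) (hc : ∀ k, c k ≤ 1) (m : ℕ) (hm : c m = 0) : val c < 1 := by
  have h1 : val c < ∑' k : ℕ, (1:ℝ) / 2 / 2 ^ k := by
    apply Summable.tsum_lt_tsum (i := m) ?_ ?_ (summable_val c hc) (summable_geometric_two' 1)
    · intro k
      show (c k : ℝ) / 2 ^ (k + 1) ≤ 1 / 2 / 2 ^ k
      rw [div_div, ← pow_succ']
      gcongr
      exact_mod_cast hc k
    · show (c m : ℝ) / 2 ^ (m + 1) < 1 / 2 / 2 ^ m
      rw [hm]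
      simp only [Nat.cast_zero, zero_div]
      positivity
  have h2 : ∑' k : ℕ, (1:ℝ) / 2 / 2 ^ k = 1 := tsum_geometric_two' 1
  linarith

lemma bit_val (c : ℕ → ℕ) (hc : ∀ k, c k ≤ 1) (hz : ∀ N, ∃ j, N ≤ j ∧ c j = 0)
    (j : ℕ) : bit j (val c) = c j := by
  set n := j + 1 with hn
  have hsum := summable_val c hc
  -- decompose val c
  have hsplit : val c = (∑ k ∈ Finset.range n, (c k : ℝ) / 2 ^ (k + 1))
      + ∑' i : ℕ, (c (i + n) : ℝ) / 2 ^ (i + n + 1) :=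
    (Summable.sum_add_tsum_nat_add n hsum).symm
  -- the tail, rescaled
  set t : ℝ := val (fun i => c (i + n)) with ht
  have htail : (∑' i : ℕ, (c (i + n) : ℝ) / 2 ^ (i + n + 1)) * 2 ^ n = t := by
    rw [ht, val, ← tsum_mul_right]
    congr 1 with i
    field_simp
    ring
  have ht0 : 0 ≤ t := val_nonneg _
  have ht1 : t < 1 := by
    obtain ⟨j', hj', hj'0⟩ := hz n
    exact val_lt_one _ (fun k => hc _) (j' - n) (by
      have : j' - n + n = j' := Nat.sub_add_cancel hj'
      rw [this, hj'0])
  -- the head, rescaled, is an integer 2*M + c j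
  set M : ℤ := ∑ k ∈ Finset.range j, (c k : ℤ) * 2 ^ (j - k - 1) with hM
  have hhead : (∑ k ∈ Finset.range n, (c k : ℝ) / 2 ^ (k + 1)) * 2 ^ n
      = ((2 * M + (c j : ℤ) : ℤ) : ℝ) := by
    push_cast
    rw [Finset.sum_mul, hn]
    have e1 : ∀ k ∈ Finset.range (j + 1),
        (c k : ℝ) / 2 ^ (k + 1) * 2 ^ (j + 1) = (c k : ℝ) * 2 ^ (j - k) := by
      intro k hk
      have hk' : k ≤ j := Nat.lt_succ_iff.1 (Finset.mem_range.1 hk)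
      field_simp
      rw [mul_assoc, ← pow_add, show k + 1 + (j - k) = j + 1 by omega]
    rw [Finset.sum_congr rfl e1, Finset.sum_range_succ, Nat.sub_self, pow_zero, mul_one]
    congr 1
    rw [hM]
    push_cast
    rw [Finset.mul_sum]
    apply Finset.sum_congr rfl
    intro k hk
    have hk' : k < j := Finset.mem_range.1 hk
    have h2 : (2:ℝ) ^ (j - k) = 2 ^ (j - k - 1) * 2 := by
      rw [← pow_succ]
      congr 1
      omega
    rw [h2]
    ring
  have hfloor : ⌊val c * 2 ^ n⌋ = 2 * M + (c j : ℤ) := by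
    rw [hsplit, add_mul, hhead, htail, add_comm, Int.floor_add_intCast,
      Int.floor_eq_zero_iff.2 ⟨ht0, ht1⟩, zero_add]
  have : bit j (val c) = ((2 * M + (c j : ℤ)) % 2).toNat := by
    unfold bit
    rw [← hn, hfloor]
  rw [this]
  have := hc j
  omega

end CauchyNL
namespace CauchyNL

lemma floor_two_mul (r : ℝ) : ⌊2 * r⌋ = 2 * ⌊r⌋ ∨ ⌊2 * r⌋ = 2 * ⌊r⌋ + 1 := by
  have h1 : (2:ℤ) * ⌊r⌋ ≤ ⌊2 * r⌋ := by
    apply Int.le_floor.2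
    push_cast
    linarith [Int.floor_le r]
  have h2 : ⌊2 * r⌋ < 2 * ⌊r⌋ + 2 := by
    apply Int.floor_lt.2
    push_cast
    linarith [Int.lt_floor_add_one r]
  omega

lemma partial_eq {u : ℝ} (hu : u ∈ Set.Ico (0:ℝ) 1) (n : ℕ) :
    ∑ k ∈ Finset.range n, (bit k u : ℝ) / 2 ^ (k + 1) = (⌊u * 2 ^ n⌋ : ℝ) / 2 ^ n := by
  induction n with
  | zero => simp [Int.floor_eq_zero_iff.2 (by simpa using hu)]
  | succ n ih =>
    rw [Finset.sum_range_succ, ih]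
    have e : u * 2 ^ (n + 1) = 2 * (u * 2 ^ n) := by ring
    set a := ⌊u * 2 ^ n⌋
    set b := ⌊u * 2 ^ (n + 1)⌋ with hbdef
    have hab : b = 2 * a ∨ b = 2 * a + 1 := by rw [hbdef, e]; exact floor_two_mul _
    have hbit : ((bit n u : ℕ) : ℤ) = b % 2 := by rw [hbdef]; exact bit_cast n u
    have hbitR : ((bit n u : ℕ) : ℝ) = ((b % 2 : ℤ) : ℝ) := by exact_mod_cast hbit
    have hb : (b : ℝ) = 2 * a + ((b % 2 : ℤ) : ℝ) := by
      have : b = 2 * a + b % 2 := by omega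
      exact_mod_cast this
    rw [hbitR]
    field_simp
    rw [hb]
    ring

lemma sub_partial_bounds {u : ℝ} (n : ℕ) :
    0 ≤ u - (⌊u * 2 ^ n⌋ : ℝ) / 2 ^ n ∧ u - (⌊u * 2 ^ n⌋ : ℝ) / 2 ^ n < (1/2) ^ n := by
  have h2 : (0:ℝ) < 2 ^ n := by positivity
  constructor
  · have := Int.floor_le (u * 2 ^ n)
    rw [sub_nonneg, div_le_iff₀ h2]
    linarith
  · rw [div_pow, one_pow, sub_lt_iff_lt_add, ← add_div, lt_div_iff₀ h2]
    linarith [Int.lt_floor_add_one (u * 2 ^ n)]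

lemma val_bits {u : ℝ} (hu : u ∈ Set.Ico (0:ℝ) 1) : val (fun k => bit k u) = u := by
  have hsum := summable_val (fun k => bit k u) (fun k => bit_le_one k u)
  have h1 : Filter.Tendsto (fun n => ∑ k ∈ Finset.range n, (bit k u : ℝ) / 2 ^ (k + 1))
      Filter.atTop (nhds (val (fun k => bit k u))) := hsum.hasSum.tendsto_sum_nat
  have h2 : Filter.Tendsto (fun n => ∑ k ∈ Finset.range n, (bit k u : ℝ) / 2 ^ (k + 1))
      Filter.atTop (nhds u) := by
    have hlow : Filter.Tendsto (fun n : ℕ => u - (1/2:ℝ) ^ n) Filter.atTop (nhds u) := by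
      have := tendsto_pow_atTop_nhds_zero_of_lt_one (by norm_num : (0:ℝ) ≤ 1/2)
        (by norm_num : (1/2:ℝ) < 1)
      simpa using Filter.Tendsto.sub tendsto_const_nhds this
    apply tendsto_of_tendsto_of_tendsto_of_le_of_le hlow tendsto_const_nhds
    · intro n
      show u - (1/2:ℝ) ^ n ≤ ∑ k ∈ Finset.range n, (bit k u : ℝ) / 2 ^ (k + 1)
      rw [partial_eq hu]
      linarith [(sub_partial_bounds (u := u) n).2]
    · intro n
      show ∑ k ∈ Finset.range n, (bit k u : ℝ) / 2 ^ (k + 1) ≤ u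
      rw [partial_eq hu]
      linarith [(sub_partial_bounds (u := u) n).1]
  exact tendsto_nhds_unique h1 h2

lemma exists_bit_zero {u : ℝ} (hu : u ∈ Set.Ico (0:ℝ) 1) (N : ℕ) :
    ∃ j, N ≤ j ∧ bit j u = 0 := by
  by_contra h
  push_neg at h
  have hone : ∀ j, N ≤ j → bit j u = 1 := fun j hj => by
    have := bit_le_one j u
    have := h j hj
    omega
  have hple : ∀ n, ∑ k ∈ Finset.range n, (bit k u : ℝ) / 2 ^ (k + 1) ≤ u := by
    intro n
    rw [partial_eq hu]
    linarith [(sub_partial_bounds (u := u) n).1]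
  have hpN : u - (1/2:ℝ) ^ N < ∑ k ∈ Finset.range N, (bit k u : ℝ) / 2 ^ (k + 1) := by
    rw [partial_eq hu]
    linarith [(sub_partial_bounds (u := u) N).2]
  have hstep : ∀ n, N ≤ n → ∑ k ∈ Finset.range n, (bit k u : ℝ) / 2 ^ (k + 1)
      = (∑ k ∈ Finset.range N, (bit k u : ℝ) / 2 ^ (k + 1)) + ((1/2:ℝ) ^ N - (1/2) ^ n) := by
    intro n hn
    induction n, hn using Nat.le_induction with
    | base => ring
    | succ n hn ih =>
      rw [Finset.sum_range_succ, ih, hone n hn]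
      have h3 : ((1:ℕ) : ℝ) / 2 ^ (n + 1) = (1/2:ℝ) ^ n - (1/2) ^ (n+1) := by
        rw [div_pow, div_pow]
        push_cast
        field_simp
        ring
      rw [h3]
      ring
  obtain ⟨n, hn⟩ := exists_pow_lt_of_lt_one
    (show (0:ℝ) < (1/2) ^ N - (u - ∑ k ∈ Finset.range N, (bit k u : ℝ) / 2 ^ (k + 1))
      by linarith) (show (1/2:ℝ) < 1 by norm_num)
  have hn' := hple (N + n)
  have heq := hstep (N + n) (Nat.le_add_right N n)
  have hpow : (1/2:ℝ) ^ (N + n) ≤ (1/2) ^ n := by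
    apply pow_le_pow_of_le_one (by norm_num) (by norm_num)
    omega
  linarith

end CauchyNL
namespace CauchyNL

/-! ### The digit-splitting maps -/

noncomputable def ebits (u : ℝ) : ℕ → ℕ := fun k => if Even k then bit (k / 2) u else 0
noncomputable def obits (v : ℝ) : ℕ → ℕ := fun k => if Even k then 0 else bit (k / 2) v
noncomputable def Te (u : ℝ) : ℝ := val (ebits u)
noncomputable def To (v : ℝ) : ℝ := val (obits v)
noncomputable def phi (s : ℝ) : ℝ := val (fun k => if Even k then bit k s else 0)
noncomputable def psi (s : ℝ) : ℝ := val (fun k => if Even k then 0 else bit k s)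
noncomputable def interleave (u v : ℝ) : ℕ → ℕ :=
  fun k => if Even k then bit (k / 2) u else bit (k / 2) v

lemma ebits_le_one (u : ℝ) (k : ℕ) : ebits u k ≤ 1 := by
  unfold ebits; split <;> simp [bit_le_one]
lemma obits_le_one (v : ℝ) (k : ℕ) : obits v k ≤ 1 := by
  unfold obits; split <;> simp [bit_le_one]
lemma interleave_le_one (u v : ℝ) (k : ℕ) : interleave u v k ≤ 1 := by
  unfold interleave; split <;> simp [bit_le_one]

lemma interleave_zeros {u : ℝ} (hu : u ∈ Set.Ico (0:ℝ) 1) (v : ℝ) (N : ℕ) :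
    ∃ j, N ≤ j ∧ interleave u v j = 0 := by
  obtain ⟨j, hj, hj0⟩ := exists_bit_zero hu N
  refine ⟨2 * j, by omega, ?_⟩
  simp [interleave, Nat.even_iff, Nat.mul_div_cancel_left, hj0]

lemma ebits_zeros (u : ℝ) (N : ℕ) : ∃ j, N ≤ j ∧ ebits u j = 0 :=
  ⟨2 * N + 1, by omega, by simp [ebits, Nat.even_iff, Nat.mul_mod]⟩

lemma obits_zeros (v : ℝ) (N : ℕ) : ∃ j, N ≤ j ∧ obits v j = 0 :=
  ⟨2 * N, by omega, by simp [obits, Nat.even_iff, Nat.mul_mod]⟩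

lemma Te_add_To {u v : ℝ} : Te u + To v = val (interleave u v) := by
  unfold Te To val
  rw [← Summable.tsum_add (summable_val _ (ebits_le_one u)) (summable_val _ (obits_le_one v))]
  congr 1 with k
  unfold ebits obits interleave
  split <;> push_cast <;> ring

/-- `phi` recovers `Te u` from the sum. -/
lemma phi_add {u v : ℝ} (hu : u ∈ Set.Ico (0:ℝ) 1) (hv : v ∈ Set.Ico (0:ℝ) 1) :
    phi (Te u + To v) = Te u := by
  rw [Te_add_To]
  unfold phi Te
  congr 1 with k
  have hb := bit_val (interleave u v) (interleave_le_one u v) (interleave_zeros hu v) k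
  by_cases h : Even k <;> simp [h, hb, interleave, ebits]

/-- `psi` recovers `To v` from the sum. -/
lemma psi_add {u v : ℝ} (hu : u ∈ Set.Ico (0:ℝ) 1) (hv : v ∈ Set.Ico (0:ℝ) 1) :
    psi (Te u + To v) = To v := by
  rw [Te_add_To]
  unfold psi To
  congr 1 with k
  have hb := bit_val (interleave u v) (interleave_le_one u v) (interleave_zeros hu v) k
  by_cases h : Even k <;> simp [h, hb, interleave, obits]

/-- `Te` is injective on `[0,1)`. -/
lemma Te_recover {u : ℝ} (hu : u ∈ Set.Ico (0:ℝ) 1) :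
    val (fun j => bit (2 * j) (Te u)) = u := by
  have h : ∀ j, bit (2 * j) (Te u) = bit j u := by
    intro j
    have hb := bit_val (ebits u) (ebits_le_one u) (ebits_zeros u) (2 * j)
    show bit (2 * j) (val (ebits u)) = bit j u
    rw [hb]
    simp [ebits, Nat.mul_div_cancel_left]
  calc val (fun j => bit (2 * j) (Te u)) = val (fun j => bit j u) := by
        congr 1 with j; rw [h j]
    _ = u := val_bits hu

lemma To_recover {v : ℝ} (hv : v ∈ Set.Ico (0:ℝ) 1) :
    val (fun j => bit (2 * j + 1) (To v)) = v := by
  have h : ∀ j, bit (2 * j + 1) (To v) = bit j v := by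
    intro j
    have hb := bit_val (obits v) (obits_le_one v) (obits_zeros v) (2 * j + 1)
    show bit (2 * j + 1) (val (obits v)) = bit j v
    rw [hb]
    have : ¬ Even (2 * j + 1) := by simp [Nat.even_iff, Nat.mul_mod]
    simp [obits, this, Nat.mul_add_div, Nat.mul_div_cancel_left]
  calc val (fun j => bit (2 * j + 1) (To v)) = val (fun j => bit j v) := by
        congr 1 with j; rw [h j]
    _ = v := val_bits hv

/-! ### Measurability -/

lemma measurable_bitR (j : ℕ) : Measurable fun x : ℝ => ((bit j x : ℕ) : ℝ) := by
  have h1 : Measurable fun x : ℝ => ⌊x * 2 ^ (j + 1)⌋ :=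
    Int.measurable_floor.comp (measurable_id.mul_const _)
  exact (Measurable.of_discrete (f := fun z : ℤ => (((z % 2).toNat : ℕ) : ℝ))).comp h1

lemma measurable_val_comp {c : ℝ → ℕ → ℕ} (hm : ∀ k, Measurable fun x => (c x k : ℝ))
    (hb : ∀ x k, c x k ≤ 1) : Measurable fun x => val (c x) := by
  apply measurable_of_tendsto_metrizable
    (f := fun n x => ∑ k ∈ Finset.range n, (c x k : ℝ) / 2 ^ (k + 1))
  · intro n
    exact Finset.measurable_sum _ (fun k _ => (hm k).div_const _)
  · rw [tendsto_pi_nhds]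
    intro x
    exact (summable_val _ (hb x)).hasSum.tendsto_sum_nat

lemma measurable_Te : Measurable Te := by
  apply measurable_val_comp (c := fun u => ebits u) _ (fun x k => ebits_le_one x k)
  intro k
  show Measurable fun x : ℝ => ((ebits x k : ℕ) : ℝ)
  unfold ebits
  split
  · exact measurable_bitR _
  · simp only [Nat.cast_zero]; exact measurable_const

lemma measurable_To : Measurable To := by
  apply measurable_val_comp (c := fun u => obits u) _ (fun x k => obits_le_one x k)
  intro k
  show Measurable fun x : ℝ => ((obits x k : ℕ) : ℝ)
  unfold obits
  split
  · simp only [Nat.cast_zero]; exact measurable_const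
  · exact measurable_bitR _

lemma measurable_phi : Measurable phi := by
  apply measurable_val_comp (c := fun s k => if Even k then bit k s else 0)
    _ (fun x k => by show (if Even k then bit k x else 0) ≤ 1; split <;> simp [bit_le_one])
  intro k
  show Measurable fun x : ℝ => ((if Even k then bit k x else 0 : ℕ) : ℝ)
  split
  · exact measurable_bitR _
  · simp only [Nat.cast_zero]; exact measurable_const

lemma measurable_psi : Measurable psi := by
  apply measurable_val_comp (c := fun s k => if Even k then 0 else bit k s)
    _ (fun x k => by show (if Even k then 0 else bit k x) ≤ 1; split <;> simp [bit_le_one])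
  intro k
  show Measurable fun x : ℝ => ((if Even k then 0 else bit k x : ℕ) : ℝ)
  split
  · simp only [Nat.cast_zero]; exact measurable_const
  · exact measurable_bitR _

end CauchyNL
namespace CauchyNL

noncomputable def mu : Measure ℝ := volume.restrict (Set.Ico (0:ℝ) 1)

instance : IsProbabilityMeasure mu :=
  ⟨by rw [mu, Measure.restrict_apply MeasurableSet.univ, Set.univ_inter, Real.volume_Ico]
      norm_num⟩

noncomputable def Pp : Measure (ℝ × ℝ) := mu.prod mu

instance : IsProbabilityMeasure Pp := by unfold Pp; infer_instance

noncomputable def S : ℝ × ℝ → ℝ := fun p => Te p.1 + To p.2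

lemma measurable_S : Measurable S :=
  (measurable_Te.comp measurable_fst).add (measurable_To.comp measurable_snd)

noncomputable def P : Measure ℝ := Measure.map S Pp

instance : IsProbabilityMeasure P := Measure.isProbabilityMeasure_map measurable_S.aemeasurable

def F : Set (ℝ × ℝ) := (Set.Ico (0:ℝ) 1) ×ˢ (Set.Ico (0:ℝ) 1)

lemma ae_mem_F : ∀ᵐ p ∂Pp, p ∈ F := by
  have hF : MeasurableSet F := (measurableSet_Ico).prod (measurableSet_Ico)
  have h1 : Pp F = 1 := by
    rw [Pp, F, Measure.prod_prod]
    have : mu (Set.Ico (0:ℝ) 1) = 1 := by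
      rw [mu, Measure.restrict_apply measurableSet_Ico, Set.inter_self, Real.volume_Ico]
      norm_num
    rw [this, one_mul]
  have : Pp Fᶜ = 0 := by
    rw [measure_compl hF (measure_ne_top _ _), h1, measure_univ, tsub_self]
  exact this

lemma hae_phi : (fun p => phi (S p)) =ᵐ[Pp] (fun p => Te p.1) := by
  filter_upwards [ae_mem_F] with p hp
  exact phi_add hp.1 hp.2

lemma hae_psi : (fun p => psi (S p)) =ᵐ[Pp] (fun p => To p.2) := by
  filter_upwards [ae_mem_F] with p hp
  exact psi_add hp.1 hp.2

lemma map_phi_P : Measure.map phi P = Measure.map Te mu := by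
  rw [P, Measure.map_map measurable_phi measurable_S, Measure.map_congr (show phi ∘ S =ᵐ[Pp] _ from hae_phi),
    show (fun p : ℝ × ℝ => Te p.1) = Te ∘ Prod.fst from rfl,
    ← Measure.map_map measurable_Te measurable_fst, Pp, Measure.map_fst_prod,
    measure_univ, one_smul]

lemma map_psi_P : Measure.map psi P = Measure.map To mu := by
  rw [P, Measure.map_map measurable_psi measurable_S, Measure.map_congr (show psi ∘ S =ᵐ[Pp] _ from hae_psi),
    show (fun p : ℝ × ℝ => To p.2) = To ∘ Prod.snd from rfl,
    ← Measure.map_map measurable_To measurable_snd, Pp, Measure.map_snd_prod,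
    measure_univ, one_smul]

lemma nonatomic_Te (u : ℝ) : Measure.map Te mu {u} = 0 := by
  rw [Measure.map_apply measurable_Te (measurableSet_singleton u), mu,
    Measure.restrict_apply (measurable_Te (measurableSet_singleton u))]
  apply Set.Subsingleton.measure_zero
  intro x hx y hy
  have hx1 : Te x = u := hx.1
  have hy1 : Te y = u := hy.1
  have := Te_recover hx.2
  have h2 := Te_recover hy.2
  rw [hx1] at this
  rw [hy1] at h2
  rw [← this, ← h2]

lemma nonatomic_To (u : ℝ) : Measure.map To mu {u} = 0 := by
  rw [Measure.map_apply measurable_To (measurableSet_singleton u), mu,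
    Measure.restrict_apply (measurable_To (measurableSet_singleton u))]
  apply Set.Subsingleton.measure_zero
  intro x hx y hy
  have hx1 : To x = u := hx.1
  have hy1 : To y = u := hy.1
  have := To_recover hx.2
  have h2 := To_recover hy.2
  rw [hx1] at this
  rw [hy1] at h2
  rw [← this, ← h2]

lemma indep_phi_psi : IndepFun phi psi P := by
  rw [indepFun_iff_map_prod_eq_prod_map_map measurable_phi.aemeasurable
    measurable_psi.aemeasurable, map_phi_P, map_psi_P]
  have h1 : (fun ω => (phi ω, psi ω)) ∘ S =ᵐ[Pp] (Prod.map Te To) := by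
    filter_upwards [ae_mem_F] with p hp
    simp only [Function.comp_apply, Prod.map_apply]
    rw [show S p = Te p.1 + To p.2 from rfl, phi_add hp.1 hp.2, psi_add hp.1 hp.2]
    rfl
  rw [P, Measure.map_map (measurable_phi.prodMk measurable_psi) measurable_S,
    Measure.map_congr h1, Pp, ← Measure.map_prod_map _ _ measurable_Te measurable_To]

lemma master_ae : ∀ᵐ ω ∂P, phi ω + psi ω = ω := by
  rw [P, ae_map_iff measurable_S.aemeasurable]
  · filter_upwards [ae_mem_F] with p hp
    rw [show S p = Te p.1 + To p.2 from rfl, phi_add hp.1 hp.2, psi_add hp.1 hp.2]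
  · exact measurableSet_eq_fun (measurable_phi.add measurable_psi) measurable_id

end CauchyNL

/-- **Nonlinear solutions of the Cauchy-type equation for independent random variables.**
There exist a probability measure `P` (on the real line, serving as the underlying
probability space) and independent random variables `X`, `Y`, each with a nonatomic,
non-degenerate distribution, together with Borel functions `φ`, `ψ` such that
`X = φ(X + Y)` a.s. and `Y = ψ(X + Y)` a.s.; consequently, for arbitrary Borel `f`, `g`
there is a Borel `h` with `f(X) + g(Y) = h(X + Y)` a.s.
(Such `X` and `Y` are obtained by splitting the binary digits of a uniform random
variable on `(0,1)` into even-indexed and odd-indexed digits.) -/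
theorem cauchy_equation_nonlinear_solutions :
    ∃ (P : Measure ℝ) (X Y φ ψ : ℝ → ℝ),
      IsProbabilityMeasure P ∧
      Measurable X ∧ Measurable Y ∧
      IndepFun X Y P ∧
      (∀ u : ℝ, Measure.map X P {u} = 0) ∧
      (∀ u : ℝ, Measure.map Y P {u} = 0) ∧
      (¬ ∃ c : ℝ, Measure.map X P = Measure.dirac c) ∧
      (¬ ∃ c : ℝ, Measure.map Y P = Measure.dirac c) ∧
      Measurable φ ∧ Measurable ψ ∧
      (∀ᵐ ω ∂P, X ω = φ (X ω + Y ω)) ∧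
      (∀ᵐ ω ∂P, Y ω = ψ (X ω + Y ω)) ∧
      (∀ f g : ℝ → ℝ, Measurable f → Measurable g →
        ∃ h : ℝ → ℝ, Measurable h ∧ ∀ᵐ ω ∂P, f (X ω) + g (Y ω) = h (X ω + Y ω)) := by
  classical
  refine ⟨CauchyNL.P, CauchyNL.phi, CauchyNL.psi, CauchyNL.phi, CauchyNL.psi,
    inferInstance, CauchyNL.measurable_phi, CauchyNL.measurable_psi,
    CauchyNL.indep_phi_psi, ?_, ?_, ?_, ?_, CauchyNL.measurable_phi,
    CauchyNL.measurable_psi, ?_, ?_, ?_⟩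
  · intro u
    rw [CauchyNL.map_phi_P]
    exact CauchyNL.nonatomic_Te u
  · intro u
    rw [CauchyNL.map_psi_P]
    exact CauchyNL.nonatomic_To u
  · rintro ⟨c, hc⟩
    have h0 : Measure.map CauchyNL.phi CauchyNL.P {c} = 0 := by
      rw [CauchyNL.map_phi_P]; exact CauchyNL.nonatomic_Te c
    rw [hc, Measure.dirac_apply_of_mem (Set.mem_singleton c)] at h0
    exact one_ne_zero h0
  · rintro ⟨c, hc⟩
    have h0 : Measure.map CauchyNL.psi CauchyNL.P {c} = 0 := by
      rw [CauchyNL.map_psi_P]; exact CauchyNL.nonatomic_To c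
    rw [hc, Measure.dirac_apply_of_mem (Set.mem_singleton c)] at h0
    exact one_ne_zero h0
  · filter_upwards [CauchyNL.master_ae] with ω hω
    rw [hω]
  · filter_upwards [CauchyNL.master_ae] with ω hω
    rw [hω]
  · intro f g hf hg
    refine ⟨fun s => f (CauchyNL.phi s) + g (CauchyNL.psi s),
      (hf.comp CauchyNL.measurable_phi).add (hg.comp CauchyNL.measurable_psi), ?_⟩
    filter_upwards [CauchyNL.master_ae] with ω hω
    rw [hω]
end
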